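/- If H is a K_4-free graph that vertex-arrows (K_{2,2,3}, K_{2,2,3}), then the join G = K_1 + H is K_5-free and edge-arrows (J_4, J_4). Consequently F_e(J_4, J_4; 5) ≤ 1 + F_v(K_{2,2,3}, K_{2,2,3}; 4). -/

import Mathlib

open SimpleGraph

/-- `Copies G F S`: `G` contains a copy of `F` all of whose vertices lie in `S`. -/
def Copies {α β : Type*} (G : SimpleGraph α) (F : SimpleGraph β) (S : Set α) : Prop :=
  ∃ f : β ↪ α, (∀ a b, F.Adj a b → G.Adj (f a) (f b)) ∧ ∀ a, f a ∈ S

/-- `G` vertex-arrows the family `F` of graphs. -/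
def VArrows {α : Type*} (G : SimpleGraph α) {r : ℕ} {β : Fin r → Type*}
    (F : ∀ i, SimpleGraph (β i)) : Prop :=
  ∀ C : α → Fin r, ∃ i, Copies G (F i) {v | C v = i}

/-- `G` vertex-arrows `(F1, F2)`. -/
def VArrows2 {α β γ : Type*} (G : SimpleGraph α) (F1 : SimpleGraph β) (F2 : SimpleGraph γ) :
    Prop :=
  ∀ C : α → Bool, Copies G F1 {v | C v = true} ∨ Copies G F2 {v | C v = false}

/-- `G` edge-arrows `(F1, F2)`: every red subgraph `R ≤ G` yields a red `F1` or a blue `F2`. -/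
def EArrows2 {α β γ : Type*} (G : SimpleGraph α) (F1 : SimpleGraph β) (F2 : SimpleGraph γ) :
    Prop :=
  ∀ R : SimpleGraph α, R ≤ G → Copies R F1 Set.univ ∨ Copies (G \ R) F2 Set.univ

/-- Vertex Folkman number for a family of target graphs. -/
noncomputable def Fv {r : ℕ} {β : Fin r → Type*} (F : ∀ i, SimpleGraph (β i)) (k : ℕ) : ℕ :=
  sInf {n | ∃ G : SimpleGraph (Fin n), G.CliqueFree k ∧ VArrows G F}

/-- Two-color vertex Folkman number. -/
noncomputable def Fv2 {β γ : Type*} (F1 : SimpleGraph β) (F2 : SimpleGraph γ) (k : ℕ) : ℕ :=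
  sInf {n | ∃ G : SimpleGraph (Fin n), G.CliqueFree k ∧ VArrows2 G F1 F2}

/-- Two-color edge Folkman number. -/
noncomputable def Fe2 {β γ : Type*} (F1 : SimpleGraph β) (F2 : SimpleGraph γ) (k : ℕ) : ℕ :=
  sInf {n | ∃ G : SimpleGraph (Fin n), G.CliqueFree k ∧ EArrows2 G F1 F2}

/-- Lexicographic product `G[H]`. -/
def lexProd {α β : Type*} (G : SimpleGraph α) (H : SimpleGraph β) : SimpleGraph (α × β) where
  Adj x y := G.Adj x.1 y.1 ∨ (x.1 = y.1 ∧ H.Adj x.2 y.2)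
  symm := ⟨by rintro x y (h | ⟨e, h⟩); exacts [Or.inl h.symm, Or.inr ⟨e.symm, h.symm⟩]⟩
  loopless := ⟨by rintro x (h | ⟨_, h⟩); exacts [G.ne_of_adj h rfl, H.ne_of_adj h rfl]⟩

/-- Complete graph on `k` vertices. -/
def Kc (k : ℕ) : SimpleGraph (Fin k) := completeGraph (Fin k)

/-- `J_k = K_k - e`: complete graph on `k` vertices minus one edge (the one
joining the two distinguished right-hand vertices). -/
def Jgraph (k : ℕ) : SimpleGraph (Fin (k - 2) ⊕ Fin 2) where
  Adj x y := x ≠ y ∧ ¬(x.isRight ∧ y.isRight)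
  symm := ⟨fun x y ⟨h1, h2⟩ => ⟨h1.symm, fun ⟨a, b⟩ => h2 ⟨b, a⟩⟩⟩
  loopless := ⟨fun x h => h.1 rfl⟩

/-- Cycle on `n` vertices. -/
def cycle (n : ℕ) : SimpleGraph (ZMod n) where
  Adj i j := i ≠ j ∧ (i - j = 1 ∨ j - i = 1)
  symm := ⟨fun i j ⟨h1, h2⟩ => ⟨h1.symm, h2.symm⟩⟩
  loopless := ⟨fun i h => h.1 rfl⟩

/-- Join of two graphs: disjoint union plus all cross edges. -/
def graphJoin {α β : Type*} (G : SimpleGraph α) (H : SimpleGraph β) :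
    SimpleGraph (α ⊕ β) where
  Adj x y := (∃ a b, x = .inl a ∧ y = .inl b ∧ G.Adj a b) ∨
             (∃ a b, x = .inr a ∧ y = .inr b ∧ H.Adj a b) ∨
             (x.isLeft ∧ y.isRight) ∨ (x.isRight ∧ y.isLeft)
  symm := by
    constructor
    rintro x y (⟨a, b, rfl, rfl, h⟩ | ⟨a, b, rfl, rfl, h⟩ | ⟨h1, h2⟩ | ⟨h1, h2⟩)
    · exact Or.inl ⟨b, a, rfl, rfl, h.symm⟩
    · exact Or.inr (Or.inl ⟨b, a, rfl, rfl, h.symm⟩)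
    · exact Or.inr (Or.inr (Or.inr ⟨h2, h1⟩))
    · exact Or.inr (Or.inr (Or.inl ⟨h2, h1⟩))
  loopless := by
    constructor
    rintro x (⟨a, b, rfl, h, h'⟩ | ⟨a, b, rfl, h, h'⟩ | ⟨h1, h2⟩ | ⟨h1, h2⟩)
    · cases h; exact G.ne_of_adj h' rfl
    · cases h; exact H.ne_of_adj h' rfl
    · cases x <;> simp_all
    · cases x <;> simp_all

/-- Clique number: the largest size of a clique. -/
noncomputable def cliqueNum' {α : Type*} (G : SimpleGraph α) : ℕ :=
  sSup {n | ∃ s : Finset α, G.IsNClique n s}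

section AuxProof

open Sum

/-- Vertex type of `K_{2,2,3}`. -/
abbrev V7 : Type := Σ i : Fin 3, Fin (![2, 2, 3] i)

/-- First part (size 2) of `K_{2,2,3}`. -/
def vA (j : Fin 2) : V7 := ⟨0, j⟩

/-- Second part (size 2) of `K_{2,2,3}`. -/
def vB (j : Fin 2) : V7 := ⟨1, j⟩

/-- Third part (size 3) of `K_{2,2,3}`. -/
def vC (j : Fin 3) : V7 := ⟨2, j⟩

lemma vA_fst (j : Fin 2) : (vA j).1 = 0 := rfl
lemma vB_fst (j : Fin 2) : (vB j).1 = 1 := rfl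
lemma vC_fst (j : Fin 3) : (vC j).1 = 2 := rfl

lemma vC_inj {j j' : Fin 3} (h : vC j = vC j') : j = j' := by
  unfold vC at h; exact eq_of_heq (Sigma.mk.inj h).2

lemma vB_inj {j j' : Fin 2} (h : vB j = vB j') : j = j' := by
  unfold vB at h; exact eq_of_heq (Sigma.mk.inj h).2

lemma vB_ne_vC (j : Fin 2) (k : Fin 3) : vB j ≠ vC k := by
  intro h
  have : (1 : Fin 3) = 2 := congrArg Sigma.fst h
  exact absurd this (by decide)

lemma core_matching (S : V7 → V7 → Prop) (hsym : ∀ a b, S a b → S b a)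
    (hm : ∀ a b c, S a b → S b c → a = c) :
    ∃ z w x y : V7, z.1 = 0 ∧ w.1 = 1 ∧ x.1 = 2 ∧ y.1 = 2 ∧ x ≠ y ∧
      ¬S z w ∧ ¬S z x ∧ ¬S z y ∧ ¬S w x ∧ ¬S w y := by
  have uniq : ∀ (v : V7) (k k' : Fin 3), S v (vC k) → S v (vC k') → k = k' := by
    intro v k k' h h'
    exact vC_inj (hm _ _ _ (hsym _ _ h) h')
  have bound : ∀ v : V7, ∃ k0 : Fin 3, ∀ k, k ≠ k0 → ¬S v (vC k) := by
    intro v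
    by_cases h : ∃ k : Fin 3, S v (vC k)
    · exact ⟨h.choose, fun k hk hS => hk (uniq v k h.choose hS h.choose_spec)⟩
    · exact ⟨0, fun k _ hS => h ⟨k, hS⟩⟩
  -- Step 1: find a cross pair (z, w) with no S-edge, one of them having no C-partner.
  have step1 : ∃ z w : V7, z.1 = 0 ∧ w.1 = 1 ∧ ¬S z w ∧
      ((∀ k : Fin 3, ¬S z (vC k)) ∨ (∀ k : Fin 3, ¬S w (vC k))) := by
    by_cases hab : ∃ i j : Fin 2, S (vA i) (vB j)
    · obtain ⟨i, j, hij⟩ := hab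
      refine ⟨vA i, vB (j + 1), rfl, rfl, ?_, Or.inl ?_⟩
      · intro h
        have hj : j = j + 1 := vB_inj (hm _ _ _ (hsym _ _ hij) h)
        exact absurd hj (by omega)
      · intro k h
        exact vB_ne_vC j k (hm _ _ _ (hsym _ _ hij) h)
    · push_neg at hab
      by_cases h1 : ∀ k : Fin 3, ¬S (vA 0) (vC k)
      · exact ⟨vA 0, vB 0, rfl, rfl, hab 0 0, Or.inl h1⟩
      by_cases h2 : ∀ k : Fin 3, ¬S (vA 1) (vC k)
      · exact ⟨vA 1, vB 0, rfl, rfl, hab 1 0, Or.inl h2⟩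
      by_cases h3 : ∀ k : Fin 3, ¬S (vB 0) (vC k)
      · exact ⟨vA 0, vB 0, rfl, rfl, hab 0 0, Or.inr h3⟩
      by_cases h4 : ∀ k : Fin 3, ¬S (vB 1) (vC k)
      · exact ⟨vA 0, vB 1, rfl, rfl, hab 0 1, Or.inr h4⟩
      -- all four matched into part C: impossible by pigeonhole
      exfalso
      push_neg at h1 h2 h3 h4
      obtain ⟨k1, hk1⟩ := h1; obtain ⟨k2, hk2⟩ := h2
      obtain ⟨k3, hk3⟩ := h3; obtain ⟨k4, hk4⟩ := h4
      have pair : ∀ (v v' : V7) (k : Fin 3), v ≠ v' → S v (vC k) → S v' (vC k) → False := by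
        intro v v' k hne h h'
        exact hne (hm _ _ _ h (hsym _ _ h'))
      have d12 : k1 ≠ k2 := fun h =>
        pair (vA 0) (vA 1) k2 (by decide) (by rw [← h]; exact hk1) hk2
      have d13 : k1 ≠ k3 := fun h =>
        pair (vA 0) (vB 0) k3 (by decide) (by rw [← h]; exact hk1) hk3
      have d14 : k1 ≠ k4 := fun h =>
        pair (vA 0) (vB 1) k4 (by decide) (by rw [← h]; exact hk1) hk4
      have d23 : k2 ≠ k3 := fun h =>
        pair (vA 1) (vB 0) k3 (by decide) (by rw [← h]; exact hk2) hk3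
      have d24 : k2 ≠ k4 := fun h =>
        pair (vA 1) (vB 1) k4 (by decide) (by rw [← h]; exact hk2) hk4
      have d34 : k3 ≠ k4 := fun h =>
        pair (vB 0) (vB 1) k4 (by decide) (by rw [← h]; exact hk3) hk4
      have e12 : (k1 : ℕ) ≠ (k2 : ℕ) := fun hv => d12 (Fin.ext hv)
      have e13 : (k1 : ℕ) ≠ (k3 : ℕ) := fun hv => d13 (Fin.ext hv)
      have e14 : (k1 : ℕ) ≠ (k4 : ℕ) := fun hv => d14 (Fin.ext hv)
      have e23 : (k2 : ℕ) ≠ (k3 : ℕ) := fun hv => d23 (Fin.ext hv)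
      have e24 : (k2 : ℕ) ≠ (k4 : ℕ) := fun hv => d24 (Fin.ext hv)
      have e34 : (k3 : ℕ) ≠ (k4 : ℕ) := fun hv => d34 (Fin.ext hv)
      have b1 := k1.isLt
      have b2 := k2.isLt
      have b3 := k3.isLt
      have b4 := k4.isLt
      omega
  obtain ⟨z, w, hz, hw, hzw, hor⟩ := step1
  have hk0 : ∃ k0 : Fin 3, ∀ k, k ≠ k0 → ¬S z (vC k) ∧ ¬S w (vC k) := by
    rcases hor with h | h
    · obtain ⟨k0, hk0⟩ := bound w
      exact ⟨k0, fun k hk => ⟨h k, hk0 k hk⟩⟩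
    · obtain ⟨k0, hk0⟩ := bound z
      exact ⟨k0, fun k hk => ⟨hk0 k hk, h k⟩⟩
  obtain ⟨k0, hk0⟩ := hk0
  have hex : ∀ k : Fin 3, ∃ p q : Fin 3, p ≠ q ∧ p ≠ k ∧ q ≠ k := by decide
  obtain ⟨p, q, hpq, hp, hq⟩ := hex k0
  refine ⟨z, w, vC p, vC q, hz, hw, rfl, rfl, ?_, hzw,
    (hk0 p hp).1, (hk0 q hq).1, (hk0 p hp).2, (hk0 q hq).2⟩
  intro h
  exact hpq (vC_inj h)

lemma jgraph_no_rr (k : ℕ) (i j : Fin 2) : ¬(Jgraph k).Adj (Sum.inr i) (Sum.inr j) := by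
  intro h
  exact h.2 ⟨rfl, rfl⟩

/-- A labelled map from the four vertices of `J₄`. -/
def mk4 {γ : Type*} (A B C D : γ) : Fin 2 ⊕ Fin 2 → γ := fun x =>
  match x with
  | .inl ⟨0, _⟩ => A
  | .inl ⟨1, _⟩ => B
  | .inr ⟨0, _⟩ => C
  | .inr ⟨1, _⟩ => D

lemma copy_to_J4 {α : Type*} {T T' : SimpleGraph (Fin 1 ⊕ α)} (f : V7 → α)
    (hf : Function.Injective f)
    (hTT' : ∀ v w : V7, v.1 ≠ w.1 →
      T.Adj (Sum.inr (f v)) (Sum.inr (f w)) ∨ T'.Adj (Sum.inr (f v)) (Sum.inr (f w)))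
    (hu : ∀ v : V7, T.Adj (Sum.inl 0) (Sum.inr (f v))) :
    Copies T (Jgraph 4) Set.univ ∨ Copies T' (Jgraph 4) Set.univ := by
  classical
  by_cases hp : ∃ a b c : V7, a ≠ c ∧ T.Adj (Sum.inr (f a)) (Sum.inr (f b)) ∧
      T.Adj (Sum.inr (f b)) (Sum.inr (f c))
  · obtain ⟨a, b, c, hac, h1, h2⟩ := hp
    left
    have hab : f a ≠ f b := fun h => h1.ne (by rw [h])
    have hbc : f b ≠ f c := fun h => h2.ne (by rw [h])
    have hac' : f a ≠ f c := fun h => hac (hf h)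
    refine ⟨⟨mk4 (Sum.inl 0) (Sum.inr (f b)) (Sum.inr (f a)) (Sum.inr (f c)), ?_⟩,
      ?_, fun _ => trivial⟩
    · intro x y h
      rcases x with ⟨(_|_|x), hx⟩ | ⟨(_|_|x), hx⟩ <;> rcases y with ⟨(_|_|y), hy⟩ | ⟨(_|_|y), hy⟩ <;>
        first
          | exact absurd hx (by omega)
          | exact absurd hy (by omega)
          | rfl
          | exact absurd (Sum.inr.inj h) hab
          | exact absurd (Sum.inr.inj h).symm hab
          | exact absurd (Sum.inr.inj h) hbc
          | exact absurd (Sum.inr.inj h).symm hbc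
          | exact absurd (Sum.inr.inj h) hac'
          | exact absurd (Sum.inr.inj h).symm hac'
          | simp [mk4] at h
    · intro x y hxy
      rcases x with ⟨(_|_|x), hx⟩ | ⟨(_|_|x), hx⟩ <;> rcases y with ⟨(_|_|y), hy⟩ | ⟨(_|_|y), hy⟩ <;>
        first
          | exact absurd hx (by omega)
          | exact absurd hy (by omega)
          | exact absurd hxy (Jgraph 4).irrefl
          | exact absurd hxy (jgraph_no_rr _ _ _)
          | exact hu b
          | exact (hu b).symm
          | exact hu a
          | exact (hu a).symm
          | exact hu c
          | exact (hu c).symm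
          | exact h1
          | exact h1.symm
          | exact h2
          | exact h2.symm
  · right
    have hm : ∀ a b c : V7, T.Adj (Sum.inr (f a)) (Sum.inr (f b)) →
        T.Adj (Sum.inr (f b)) (Sum.inr (f c)) → a = c := by
      intro a b c h1 h2
      by_contra hac
      exact hp ⟨a, b, c, hac, h1, h2⟩
    obtain ⟨z, w, x, y, hz, hw, hx, hy, hxy, s1, s2, s3, s4, s5⟩ :=
      core_matching (fun v w => T.Adj (Sum.inr (f v)) (Sum.inr (f w)))
        (fun a b h => h.symm) hm
    have hzw : z.1 ≠ w.1 := by rw [hz, hw]; decide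
    have hzx : z.1 ≠ x.1 := by rw [hz, hx]; decide
    have hzy : z.1 ≠ y.1 := by rw [hz, hy]; decide
    have hwx : w.1 ≠ x.1 := by rw [hw, hx]; decide
    have hwy : w.1 ≠ y.1 := by rw [hw, hy]; decide
    have e1 : T'.Adj (Sum.inr (f z)) (Sum.inr (f w)) := (hTT' z w hzw).resolve_left s1
    have e2 : T'.Adj (Sum.inr (f z)) (Sum.inr (f x)) := (hTT' z x hzx).resolve_left s2
    have e3 : T'.Adj (Sum.inr (f z)) (Sum.inr (f y)) := (hTT' z y hzy).resolve_left s3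
    have e4 : T'.Adj (Sum.inr (f w)) (Sum.inr (f x)) := (hTT' w x hwx).resolve_left s4
    have e5 : T'.Adj (Sum.inr (f w)) (Sum.inr (f y)) := (hTT' w y hwy).resolve_left s5
    have hne : ∀ p q : V7, p.1 ≠ q.1 → f p ≠ f q := by
      intro p q h hpq
      exact h (congrArg Sigma.fst (hf hpq))
    have n1 : f z ≠ f w := hne z w hzw
    have n2 : f z ≠ f x := hne z x hzx
    have n3 : f z ≠ f y := hne z y hzy
    have n4 : f w ≠ f x := hne w x hwx
    have n5 : f w ≠ f y := hne w y hwy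
    have n6 : f x ≠ f y := fun h => hxy (hf h)
    refine ⟨⟨mk4 (Sum.inr (f z)) (Sum.inr (f w)) (Sum.inr (f x)) (Sum.inr (f y)), ?_⟩,
      ?_, fun _ => trivial⟩
    · intro p q h
      rcases p with ⟨(_|_|p), hp⟩ | ⟨(_|_|p), hp⟩ <;> rcases q with ⟨(_|_|q), hq⟩ | ⟨(_|_|q), hq⟩ <;>
        first
          | exact absurd hp (by omega)
          | exact absurd hq (by omega)
          | rfl
          | exact absurd (Sum.inr.inj h) n1
          | exact absurd (Sum.inr.inj h).symm n1
          | exact absurd (Sum.inr.inj h) n2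
          | exact absurd (Sum.inr.inj h).symm n2
          | exact absurd (Sum.inr.inj h) n3
          | exact absurd (Sum.inr.inj h).symm n3
          | exact absurd (Sum.inr.inj h) n4
          | exact absurd (Sum.inr.inj h).symm n4
          | exact absurd (Sum.inr.inj h) n5
          | exact absurd (Sum.inr.inj h).symm n5
          | exact absurd (Sum.inr.inj h) n6
          | exact absurd (Sum.inr.inj h).symm n6
    · intro p q hpq
      rcases p with ⟨(_|_|p), hp⟩ | ⟨(_|_|p), hp⟩ <;> rcases q with ⟨(_|_|q), hq⟩ | ⟨(_|_|q), hq⟩ <;>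
        first
          | exact absurd hp (by omega)
          | exact absurd hq (by omega)
          | exact absurd hpq (Jgraph 4).irrefl
          | exact absurd hpq (jgraph_no_rr _ _ _)
          | exact e1
          | exact e1.symm
          | exact e2
          | exact e2.symm
          | exact e3
          | exact e3.symm
          | exact e4
          | exact e4.symm
          | exact e5
          | exact e5.symm

lemma main_con {α : Type*} (H : SimpleGraph α) (hfree : H.CliqueFree 4)
    (harr : VArrows2 H (completeMultipartiteGraph (fun i : Fin 3 => Fin (![2, 2, 3] i)))
      (completeMultipartiteGraph (fun i : Fin 3 => Fin (![2, 2, 3] i)))) :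
    (graphJoin (Kc 1) H).CliqueFree 5 ∧
      EArrows2 (graphJoin (Kc 1) H) (Jgraph 4) (Jgraph 4) := by
  classical
  have hcross : ∀ a : α, (graphJoin (Kc 1) H).Adj (Sum.inl 0) (Sum.inr a) := by
    intro a
    exact Or.inr (Or.inr (Or.inl ⟨rfl, rfl⟩))
  have hinr : ∀ a b : α, H.Adj a b → (graphJoin (Kc 1) H).Adj (Sum.inr a) (Sum.inr b) := by
    intro a b h
    exact Or.inr (Or.inl ⟨a, b, rfl, rfl, h⟩)
  constructor
  · -- K₅-freeness
    intro s hs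
    have hcard : s.card = 5 := hs.2
    have hclique := hs.1
    set t := s.erase (Sum.inl 0) with ht
    have htc : 4 ≤ t.card := by
      by_cases h : (Sum.inl 0 : Fin 1 ⊕ α) ∈ s
      · rw [ht, Finset.card_erase_of_mem h, hcard]
      · rw [ht, Finset.erase_eq_of_notMem h, hcard]; omega
    have hinrt : ∀ x ∈ t, ∃ a : α, x = Sum.inr a := by
      intro x hx
      rcases x with i | a
      · have : i = 0 := Subsingleton.elim i 0
        subst this
        exact absurd rfl (Finset.ne_of_mem_erase hx)
      · exact ⟨a, rfl⟩
    set t₂ : Finset α := t.preimage Sum.inr (Sum.inr_injective.injOn) with ht₂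
    have hmap : t₂.map ⟨Sum.inr, Sum.inr_injective⟩ = t := by
      ext x
      simp only [Finset.mem_map, Finset.mem_preimage, Function.Embedding.coeFn_mk, ht₂]
      constructor
      · rintro ⟨a, ha, rfl⟩; exact ha
      · intro hx
        obtain ⟨a, rfl⟩ := hinrt x hx
        exact ⟨a, hx, rfl⟩
    have ht₂card : 4 ≤ t₂.card := by
      have := Finset.card_map (f := (⟨Sum.inr, Sum.inr_injective⟩ : α ↪ Fin 1 ⊕ α)) (s := t₂)
      rw [hmap] at this
      omega
    have hcl : H.IsClique (t₂ : Set α) := by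
      intro a ha b hb hne
      have hat : Sum.inr a ∈ t := by rw [← hmap]; exact Finset.mem_map_of_mem _ ha
      have hbt : Sum.inr b ∈ t := by rw [← hmap]; exact Finset.mem_map_of_mem _ hb
      have hadj := hclique (Finset.mem_of_mem_erase hat) (Finset.mem_of_mem_erase hbt)
        (by simpa using hne)
      rcases hadj with ⟨p, q, hp, _, _⟩ | ⟨p, q, hp, hq, hH⟩ | ⟨h1, _⟩ | ⟨_, h2⟩
      · exact absurd hp (by simp)
      · rw [Sum.inr.injEq] at hp hq; subst hp; subst hq; exact hH
      · exact absurd h1 (by simp)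
      · exact absurd h2 (by simp)
    obtain ⟨u, hus, huc⟩ := Finset.exists_subset_card_eq ht₂card
    exact hfree u ⟨hcl.subset (Finset.coe_subset.mpr hus), huc⟩
  · -- edge-arrowing
    intro R hRle
    set C : α → Bool := fun a => if R.Adj (Sum.inl 0) (Sum.inr a) then true else false
      with hCdef
    rcases harr C with ⟨f, hadj, hmem⟩ | ⟨f, hadj, hmem⟩
    · -- red copy
      have hu : ∀ v : V7, R.Adj (Sum.inl 0) (Sum.inr (f v)) := by
        intro v
        have h := hmem v
        simp only [Set.mem_setOf_eq, hCdef] at h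
        by_contra hc
        rw [if_neg hc] at h
        exact absurd h (by decide)
      have hTT' : ∀ v w : V7, v.1 ≠ w.1 →
          R.Adj (Sum.inr (f v)) (Sum.inr (f w)) ∨
          ((graphJoin (Kc 1) H) \ R).Adj (Sum.inr (f v)) (Sum.inr (f w)) := by
        intro v w hvw
        have hG : (graphJoin (Kc 1) H).Adj (Sum.inr (f v)) (Sum.inr (f w)) :=
          hinr _ _ (hadj v w hvw)
        by_cases h : R.Adj (Sum.inr (f v)) (Sum.inr (f w))
        · exact Or.inl h
        · exact Or.inr ((sdiff_adj _ _ _ _).mpr ⟨hG, h⟩)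
      exact copy_to_J4 (⇑f) f.injective hTT' hu
    · -- blue copy
      have hu : ∀ v : V7, ((graphJoin (Kc 1) H) \ R).Adj (Sum.inl 0) (Sum.inr (f v)) := by
        intro v
        have h := hmem v
        simp only [Set.mem_setOf_eq, hCdef] at h
        refine (sdiff_adj _ _ _ _).mpr ⟨hcross (f v), ?_⟩
        intro hc
        rw [if_pos hc] at h
        exact absurd h (by decide)
      have hTT' : ∀ v w : V7, v.1 ≠ w.1 →
          ((graphJoin (Kc 1) H) \ R).Adj (Sum.inr (f v)) (Sum.inr (f w)) ∨
          R.Adj (Sum.inr (f v)) (Sum.inr (f w)) := by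
        intro v w hvw
        have hG : (graphJoin (Kc 1) H).Adj (Sum.inr (f v)) (Sum.inr (f w)) :=
          hinr _ _ (hadj v w hvw)
        by_cases h : R.Adj (Sum.inr (f v)) (Sum.inr (f w))
        · exact Or.inr h
        · exact Or.inl ((sdiff_adj _ _ _ _).mpr ⟨hG, h⟩)
      exact (copy_to_J4 (⇑f) f.injective hTT' hu).symm

lemma copies_univ_comp {α α' β : Type*} {G : SimpleGraph α} {G' : SimpleGraph α'}
    {F : SimpleGraph β} (φ : α ↪ α') (h : ∀ a b, G.Adj a b → G'.Adj (φ a) (φ b)) :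
    Copies G F Set.univ → Copies G' F Set.univ := by
  rintro ⟨f, hf, -⟩
  exact ⟨f.trans φ, fun a b hab => h _ _ (hf a b hab), fun _ => trivial⟩

lemma earrows2_iso {α α' β γ : Type*} {G : SimpleGraph α} {G' : SimpleGraph α'}
    {F1 : SimpleGraph β} {F2 : SimpleGraph γ} (φ : G ≃g G') (h : EArrows2 G F1 F2) :
    EArrows2 G' F1 F2 := by
  intro R hRle
  have hle : SimpleGraph.comap (⇑φ) R ≤ G := by
    intro a b hab
    rw [SimpleGraph.comap_adj] at hab
    exact φ.map_rel_iff.mp (hRle hab)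
  rcases h (SimpleGraph.comap (⇑φ) R) hle with hc | hc
  · left
    exact copies_univ_comp φ.toEquiv.toEmbedding (fun a b hab => hab) hc
  · right
    refine copies_univ_comp φ.toEquiv.toEmbedding ?_ hc
    intro a b hab
    rw [sdiff_adj] at hab ⊢
    exact ⟨φ.map_rel_iff.mpr hab.1, hab.2⟩

lemma varrows2_iso {α α' β γ : Type*} {G : SimpleGraph α} {G' : SimpleGraph α'}
    {F1 : SimpleGraph β} {F2 : SimpleGraph γ} (φ : G ≃g G') (h : VArrows2 G F1 F2) :
    VArrows2 G' F1 F2 := by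
  intro C
  rcases h (fun a => C (φ a)) with ⟨f, hf, hmem⟩ | ⟨f, hf, hmem⟩
  · exact Or.inl ⟨f.trans φ.toEquiv.toEmbedding, fun a b hab => φ.map_rel_iff.mpr (hf a b hab),
      fun a => hmem a⟩
  · exact Or.inr ⟨f.trans φ.toEquiv.toEmbedding, fun a b hab => φ.map_rel_iff.mpr (hf a b hab),
      fun a => hmem a⟩

end AuxProof

/-- If `H` is `K_4`-free and vertex-arrows `(K_{2,2,3},K_{2,2,3})`, then `K_1 + H` is
`K_5`-free and edge-arrows `(J_4,J_4)`; consequently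
`F_e(J_4,J_4;5) ≤ 1 + F_v(K_{2,2,3},K_{2,2,3};4)`. -/
theorem join_K1_edge_arrows_J4 {α : Type*} [Fintype α] (H : SimpleGraph α)
    (hfree : H.CliqueFree 4)
    (harr : VArrows2 H (completeMultipartiteGraph (fun i : Fin 3 => Fin (![2, 2, 3] i)))
      (completeMultipartiteGraph (fun i : Fin 3 => Fin (![2, 2, 3] i)))) :
    (graphJoin (Kc 1) H).CliqueFree 5 ∧
    EArrows2 (graphJoin (Kc 1) H) (Jgraph 4) (Jgraph 4) ∧
    Fe2 (Jgraph 4) (Jgraph 4) 5 ≤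
      1 + Fv2 (completeMultipartiteGraph (fun i : Fin 3 => Fin (![2, 2, 3] i)))
        (completeMultipartiteGraph (fun i : Fin 3 => Fin (![2, 2, 3] i))) 4 := by
  classical
  obtain ⟨hfree5, harrE⟩ := main_con H hfree harr
  refine ⟨hfree5, harrE, ?_⟩
  -- the witness graph on `Fin (card α)` shows the defining set of `Fv2` is nonempty
  set e : α ≃ Fin (Fintype.card α) := Fintype.equivFin α with he
  have hmem0 : Fintype.card α ∈
      {n | ∃ G : SimpleGraph (Fin n),
        G.CliqueFree 4 ∧ VArrows2 G
          (completeMultipartiteGraph (fun i : Fin 3 => Fin (![2, 2, 3] i)))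
          (completeMultipartiteGraph (fun i : Fin 3 => Fin (![2, 2, 3] i)))} := by
    refine ⟨SimpleGraph.comap (⇑e.symm.toEmbedding) H, ?_, ?_⟩
    · exact hfree.comap ⟨(SimpleGraph.Iso.comap e.symm H).toCopy⟩
    · exact varrows2_iso ((SimpleGraph.Iso.comap e.symm H).symm) harr
  set N := Fv2 (completeMultipartiteGraph (fun i : Fin 3 => Fin (![2, 2, 3] i)))
      (completeMultipartiteGraph (fun i : Fin 3 => Fin (![2, 2, 3] i))) 4 with hN
  have hFv : N ∈
      {n | ∃ G : SimpleGraph (Fin n),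
        G.CliqueFree 4 ∧ VArrows2 G
          (completeMultipartiteGraph (fun i : Fin 3 => Fin (![2, 2, 3] i)))
          (completeMultipartiteGraph (fun i : Fin 3 => Fin (![2, 2, 3] i)))} :=
    Nat.sInf_mem ⟨_, hmem0⟩
  obtain ⟨G', hG'free, hG'arr⟩ := hFv
  obtain ⟨h5, hE⟩ := main_con G' hG'free hG'arr
  set e2 : Fin 1 ⊕ Fin N ≃ Fin (1 + N) := finSumFinEquiv with he2
  have hmem1 : 1 + N ∈ {n | ∃ G : SimpleGraph (Fin n),
      G.CliqueFree 5 ∧ EArrows2 G (Jgraph 4) (Jgraph 4)} := by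
    refine ⟨SimpleGraph.comap (⇑e2.symm.toEmbedding) (graphJoin (Kc 1) G'), ?_, ?_⟩
    · exact h5.comap ⟨(SimpleGraph.Iso.comap e2.symm (graphJoin (Kc 1) G')).toCopy⟩
    · exact earrows2_iso ((SimpleGraph.Iso.comap e2.symm (graphJoin (Kc 1) G')).symm) hE
  exact Nat.sInf_le hmem1
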